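/- If L₁, L₂, C are regular, then T₁ = { p ∈ L₁ | ∃ s ∈ L₂, ps ∈ C and no nonempty w₃, w₄ exist with s = w₃w₄, p w₃ ∈ L₁, w₄ ∈ L₂ } is regular. -/

import Mathlib

/-- The extended alphabet `A ∪ {□}` is modeled as `Option A` (`none` is `□`).
The erasing homomorphism `π` maps each letter of `A` to itself and `□` to the
empty word. -/
def eraseBox {A : Type} (w : List (Option A)) : List A := w.filterMap id

/-- Inverse image `π⁻¹(L)` of a language `L ⊆ A*` under the erasing
homomorphism. -/
def piInv {A : Type} (L : Set (List A)) : Set (List (Option A)) :=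
  {w | eraseBox w ∈ L}

/-- The embedding of a language over `A` into the extended alphabet
`A ∪ {□}`. -/
def emb {A : Type} (L : Set (List A)) : Set (List (Option A)) :=
  {w | ∃ u ∈ L, w = u.map some}

/-- Concatenation of languages. -/
def conc {X : Type} (L K : Set (List X)) : Set (List X) :=
  {w | ∃ u ∈ L, ∃ v ∈ K, w = u ++ v}

/-- The singleton language `{□}` over the extended alphabet. -/
def boxLang {A : Type} : Set (List (Option A)) := {[none]}

/-- The longest-match condition `c(p,s)`: no nonempty prefix of `s` can be
absorbed into the `L₁`-part. -/
def lmCond {A : Type} (L₁ L₂ : Set (List A)) (p s : List A) : Prop :=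
  ¬ ∃ w₃ w₄, w₃ ≠ [] ∧ s = w₃ ++ w₄ ∧ p ++ w₃ ∈ L₁ ∧ w₄ ∈ L₂

/-- The set `I = { w₁ □ w₂ | w₁w₂ ∈ C, w₁ ∈ L₁, w₂ ∈ L₂, c(w₁,w₂) }`. -/
def Iset {A : Type} (L₁ L₂ C : Set (List A)) : Set (List (Option A)) :=
  {w | ∃ p s, w = p.map some ++ none :: s.map some ∧
    p ++ s ∈ C ∧ p ∈ L₁ ∧ s ∈ L₂ ∧ lmCond L₁ L₂ p s}

/-- If `L₁`, `L₂`, `C` are regular, then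
`T₁ = { p ∈ L₁ | ∃ s ∈ L₂, ps ∈ C ∧ c(p,s) }` is regular. -/
theorem T1_isRegular {A : Type} [Fintype A] (L₁ L₂ C : Language A)
    (h₁ : L₁.IsRegular) (h₂ : L₂.IsRegular) (hC : C.IsRegular) :
    Language.IsRegular {p : List A | p ∈ L₁ ∧
      ∃ s ∈ L₂, p ++ s ∈ C ∧ lmCond (L₁ : Set (List A)) L₂ p s} := by
  classical
  obtain ⟨Q₁, i₁, M₁, hM₁⟩ := h₁
  obtain ⟨QC, iC, MC, hMC⟩ := hC
  haveI := i₁; haveI := iC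
  let M : DFA A (Q₁ × QC) :=
    { step := fun q a => (M₁.step q.1 a, MC.step q.2 a)
      start := (M₁.start, MC.start)
      accept := {q | q.1 ∈ M₁.accept ∧ ∃ s ∈ L₂,
        MC.evalFrom q.2 s ∈ MC.accept ∧
        ¬ ∃ w₃ w₄, w₃ ≠ [] ∧ s = w₃ ++ w₄ ∧
          M₁.evalFrom q.1 w₃ ∈ M₁.accept ∧ w₄ ∈ L₂} }
  have heval : ∀ (x : List A) (q : Q₁ × QC),
      M.evalFrom q x = (M₁.evalFrom q.1 x, MC.evalFrom q.2 x) := by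
    intro x
    induction x with
    | nil => intro q; rfl
    | cons a x ih =>
      intro q
      simp only [DFA.evalFrom, List.foldl_cons] at *
      exact ih _
  refine ⟨Q₁ × QC, inferInstance, M, ?_⟩
  ext p
  rw [DFA.mem_accepts]
  show M.evalFrom M.start p ∈ M.accept ↔ _
  rw [heval]
  have hm1 : ∀ x : List A, x ∈ L₁ ↔ M₁.evalFrom M₁.start x ∈ M₁.accept := by
    intro x; rw [← hM₁]; rfl
  have hmc : ∀ x : List A, x ∈ C ↔ MC.evalFrom MC.start x ∈ MC.accept := by
    intro x; rw [← hMC]; rfl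
  constructor
  · rintro ⟨ha, s, hs, hacc, hnot⟩
    refine ⟨(hm1 p).2 ha, s, hs, ?_, ?_⟩
    · rw [hmc, DFA.evalFrom_of_append]; exact hacc
    · rintro ⟨w₃, w₄, hne, hsplit, hw₃, hw₄⟩
      exact hnot ⟨w₃, w₄, hne, hsplit, by have h := (hm1 (p ++ w₃)).1 hw₃; rwa [DFA.evalFrom_of_append] at h, hw₄⟩
  · rintro ⟨hp, s, hs, hC', hlm⟩
    refine ⟨(hm1 p).1 hp, s, hs, ?_, ?_⟩
    · rw [hmc, DFA.evalFrom_of_append] at hC'; exact hC'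
    · rintro ⟨w₃, w₄, hne, hsplit, hw₃, hw₄⟩
      exact hlm ⟨w₃, w₄, hne, hsplit, (hm1 (p ++ w₃)).2 (by rwa [DFA.evalFrom_of_append]), hw₄⟩
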